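/- arXiv:1803.06735 — 2 statements merged into one kernel-verified Lean document; each statement's English description precedes it below -/
import Mathlib

section
/- Identifiability of the constrained three-component Gaussian mixture. Let μ1, μ1' < 0 < μ2, μ2', let σ1, σ1', σ2, σ2' > 0, and let λ_1, λ_2, λ_1', λ_2' ∈ (0,1) with λ_1 + λ_2 < 1 and λ_1' + λ_2' < 1. If for every t ∈ ℝ, (1 − λ_1 − λ_2) φ_{(μ1,σ1)}(t) + λ_1 φ(t) + λ_2 φ_{(μ2,σ2)}(t) = (1 − λ_1' − λ_2') φ_{(μ1',σ1')}(t) + λ_1' φ(t) + λ_2' φ_{(μ2',σ2')}(t), then μ1 = μ1', σ1 = σ1', μ2 = μ2', σ2 = σ2', λ_1 = λ_1', and λ_2 = λ_2'. -/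
open MeasureTheory

/-- Standard normal density. -/
noncomputable def stdPhi (t : ℝ) : ℝ := Real.exp (-t ^ 2 / 2) / Real.sqrt (2 * Real.pi)

/-- Density of `N(μ, σ²)`. -/
noncomputable def phiMS (μ σ t : ℝ) : ℝ := (1 / σ) * stdPhi ((t - μ) / σ)

open Filter

/-- A quadratic with negative leading coefficient (or zero leading coefficient and negative
linear coefficient) tends to `-∞`. -/
lemma quad_atBot {A B C : ℝ} (h : A < 0 ∨ (A = 0 ∧ B < 0)) :
    Tendsto (fun t : ℝ => A * t ^ 2 + B * t + C) atTop atBot := by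
  rcases h with hA | ⟨hA, hB⟩
  · have h1 : Tendsto (fun t : ℝ => A * t + B) atTop atBot :=
      tendsto_atBot_add_const_right _ B ((tendsto_const_mul_atBot_of_neg hA).2 tendsto_id)
    have h2 : Tendsto (fun t : ℝ => t * (A * t + B)) atTop atBot :=
      Tendsto.atTop_mul_atBot₀ tendsto_id h1
    have h3 := tendsto_atBot_add_const_right atTop C h2
    exact h3.congr (fun t => by ring)
  · subst hA
    have h1 : Tendsto (fun t : ℝ => B * t + C) atTop atBot :=
      tendsto_atBot_add_const_right _ C ((tendsto_const_mul_atBot_of_neg hB).2 tendsto_id)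
    exact h1.congr (fun t => by ring)

lemma exp_term_tendsto (μ σ μ0 σ0 : ℝ) (hσ : 0 < σ) (hσ0 : 0 < σ0)
    (h : σ < σ0 ∨ (σ = σ0 ∧ μ < μ0)) :
    Tendsto (fun t : ℝ =>
      Real.exp ((t - μ0) ^ 2 / (2 * σ0 ^ 2) - (t - μ) ^ 2 / (2 * σ ^ 2))) atTop (nhds 0) := by
  set A := 1 / (2 * σ0 ^ 2) - 1 / (2 * σ ^ 2) with hA
  set B := μ / σ ^ 2 - μ0 / σ0 ^ 2 with hB
  set C := μ0 ^ 2 / (2 * σ0 ^ 2) - μ ^ 2 / (2 * σ ^ 2) with hC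
  have key : ∀ t : ℝ, (t - μ0) ^ 2 / (2 * σ0 ^ 2) - (t - μ) ^ 2 / (2 * σ ^ 2)
      = A * t ^ 2 + B * t + C := by
    intro t
    rw [hA, hB, hC]
    field_simp
    ring
  have hcond : A < 0 ∨ (A = 0 ∧ B < 0) := by
    rcases h with hlt | ⟨heq, hμ⟩
    · left
      have h2 : σ ^ 2 < σ0 ^ 2 := by nlinarith
      have h3 : (1 : ℝ) / (2 * σ0 ^ 2) < 1 / (2 * σ ^ 2) :=
        one_div_lt_one_div_of_lt (by positivity) (by linarith)
      rw [hA]; linarith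
    · right
      subst heq
      constructor
      · rw [hA]; ring
      · rw [hB]
        have h2 : (0 : ℝ) < σ ^ 2 := by positivity
        have h3 : μ / σ ^ 2 < μ0 / σ ^ 2 := (div_lt_div_iff_of_pos_right h2).2 hμ
        linarith
  have hbot := quad_atBot (A := A) (B := B) (C := C) hcond
  have h2 := Real.tendsto_exp_atBot.comp hbot
  exact h2.congr fun t => congrArg Real.exp (key t).symm

/-- Linear independence of distinct Gaussian densities, formulated over a finite set of
parameter pairs `(μ, σ)`. -/
lemma gauss_indep :
    ∀ s : Finset (ℝ × ℝ), (∀ q ∈ s, 0 < q.2) →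
    ∀ c : ℝ × ℝ → ℝ, (∀ t, ∑ q ∈ s, c q * phiMS q.1 q.2 t = 0) →
    ∀ q ∈ s, c q = 0 := by
  intro s
  induction s using Finset.strongInduction with
  | _ s ih =>
    intro hσ c hsum q hq
    have hne : s.Nonempty := ⟨q, hq⟩
    obtain ⟨m, hm, hmax⟩ := s.exists_max_image (fun p => p.2) hne
    have hm2 : m ∈ s.filter (fun p => p.2 = m.2) := Finset.mem_filter.2 ⟨hm, rfl⟩
    obtain ⟨q0, hq0s2, hq0max⟩ :=
      (s.filter (fun p => p.2 = m.2)).exists_max_image (fun p => p.1) ⟨m, hm2⟩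
    have hq0s : q0 ∈ s := (Finset.mem_filter.1 hq0s2).1
    have hq0σ : q0.2 = m.2 := (Finset.mem_filter.1 hq0s2).2
    have hq0pos : 0 < q0.2 := hσ q0 hq0s
    have hdom : ∀ p ∈ s, p ≠ q0 → p.2 < q0.2 ∨ (p.2 = q0.2 ∧ p.1 < q0.1) := by
      intro p hp hpne
      rcases lt_or_eq_of_le (hmax p hp) with hlt | heq2
      · left; rw [hq0σ]; exact hlt
      · right
        have hps2 : p ∈ s.filter (fun p => p.2 = m.2) := Finset.mem_filter.2 ⟨hp, heq2⟩
        have hpσ : p.2 = q0.2 := heq2.trans hq0σ.symm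
        refine ⟨hpσ, ?_⟩
        rcases lt_or_eq_of_le (hq0max p hps2) with h | h
        · exact h
        · exact absurd (Prod.ext h hpσ) hpne
    -- the key step: c q0 = 0
    set K : ℝ := 1 / (q0.2 * Real.sqrt (2 * Real.pi)) with hKdef
    have hsqrt : 0 < Real.sqrt (2 * Real.pi) :=
      Real.sqrt_pos.2 (by positivity)
    have hK : 0 < K := by rw [hKdef]; positivity
    have hterm : ∀ p ∈ s, ∀ t : ℝ,
        c p * phiMS p.1 p.2 t * Real.exp ((t - q0.1) ^ 2 / (2 * q0.2 ^ 2))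
          = (c p / (p.2 * Real.sqrt (2 * Real.pi))) *
            Real.exp ((t - q0.1) ^ 2 / (2 * q0.2 ^ 2) - (t - p.1) ^ 2 / (2 * p.2 ^ 2)) := by
      intro p hp t
      have hp2 : 0 < p.2 := hσ p hp
      have hexp : (t - q0.1) ^ 2 / (2 * q0.2 ^ 2) - (t - p.1) ^ 2 / (2 * p.2 ^ 2)
          = (-((t - p.1) / p.2) ^ 2 / 2) + (t - q0.1) ^ 2 / (2 * q0.2 ^ 2) := by
        field_simp
        ring
      rw [hexp, Real.exp_add]
      unfold phiMS stdPhi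
      field_simp
    have hcq0 : c q0 = 0 := by
      have hlim : Tendsto
          (fun t => ∑ p ∈ s, c p * phiMS p.1 p.2 t * Real.exp ((t - q0.1) ^ 2 / (2 * q0.2 ^ 2)))
          atTop (nhds (∑ p ∈ s, if p = q0 then c q0 * K else 0)) := by
        apply tendsto_finset_sum
        intro p hp
        by_cases hpq : p = q0
        · have heqc : ∀ t : ℝ,
              c p * phiMS p.1 p.2 t * Real.exp ((t - q0.1) ^ 2 / (2 * q0.2 ^ 2)) = c q0 * K := by
            intro t
            rw [hpq, hterm q0 hq0s t, sub_self, Real.exp_zero, mul_one, hKdef]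
            ring
          simp only [if_pos hpq]
          exact tendsto_const_nhds.congr (fun t => (heqc t).symm)
        · simp only [if_neg hpq]
          have h0 := exp_term_tendsto p.1 p.2 q0.1 q0.2 (hσ p hp) hq0pos (hdom p hp hpq)
          have h1 := h0.const_mul (c p / (p.2 * Real.sqrt (2 * Real.pi)))
          rw [mul_zero] at h1
          exact h1.congr (fun t => (hterm p hp t).symm)
      have hzero : ∀ t : ℝ,
          (∑ p ∈ s, c p * phiMS p.1 p.2 t * Real.exp ((t - q0.1) ^ 2 / (2 * q0.2 ^ 2))) = 0 := by
        intro t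
        rw [← Finset.sum_mul, hsum t, zero_mul]
      have hlim0 : Tendsto
          (fun t => ∑ p ∈ s, c p * phiMS p.1 p.2 t * Real.exp ((t - q0.1) ^ 2 / (2 * q0.2 ^ 2)))
          atTop (nhds 0) := by
        exact tendsto_const_nhds.congr (fun t => (hzero t).symm)
      have huniq := tendsto_nhds_unique hlim hlim0
      rw [Finset.sum_ite_eq' s q0 (fun _ => c q0 * K)] at huniq
      rw [if_pos hq0s] at huniq
      have := mul_eq_zero.1 huniq
      rcases this with h | h
      · exact h
      · exact absurd h (ne_of_gt hK)
    by_cases hqq : q = q0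
    · rw [hqq]; exact hcq0
    · refine ih (s.erase q0) (Finset.erase_ssubset hq0s)
        (fun p hp => hσ p (Finset.mem_of_mem_erase hp)) c ?_ q (Finset.mem_erase.2 ⟨hqq, hq⟩)
      intro t
      have h := hsum t
      rw [← Finset.add_sum_erase s _ hq0s, hcq0, zero_mul, zero_add] at h
      exact h

/-- Identifiability of the constrained three-component Gaussian mixture. -/
theorem trinormal_mixture_identifiable
    (μ1 μ1' μ2 μ2' σ1 σ1' σ2 σ2' lam1 lam2 lam1' lam2' : ℝ)
    (hμ1 : μ1 < 0) (hμ1' : μ1' < 0) (hμ2 : 0 < μ2) (hμ2' : 0 < μ2')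
    (hσ1 : 0 < σ1) (hσ1' : 0 < σ1') (hσ2 : 0 < σ2) (hσ2' : 0 < σ2')
    (hlam1 : 0 < lam1) (hlam1lt : lam1 < 1) (hlam2 : 0 < lam2) (hlam2lt : lam2 < 1)
    (hlam1' : 0 < lam1') (hlam1lt' : lam1' < 1) (hlam2' : 0 < lam2') (hlam2lt' : lam2' < 1)
    (hsum : lam1 + lam2 < 1) (hsum' : lam1' + lam2' < 1)
    (heq : ∀ t : ℝ,
      (1 - lam1 - lam2) * phiMS μ1 σ1 t + lam1 * stdPhi t + lam2 * phiMS μ2 σ2 t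
        = (1 - lam1' - lam2') * phiMS μ1' σ1' t + lam1' * stdPhi t
            + lam2' * phiMS μ2' σ2' t) :
    μ1 = μ1' ∧ σ1 = σ1' ∧ μ2 = μ2' ∧ σ2 = σ2' ∧ lam1 = lam1' ∧ lam2 = lam2' := by
  set P1 : ℝ × ℝ := (μ1, σ1) with hP1def
  set P0 : ℝ × ℝ := ((0 : ℝ), (1 : ℝ)) with hP0def
  set P2 : ℝ × ℝ := (μ2, σ2) with hP2def
  set Q1 : ℝ × ℝ := (μ1', σ1') with hQ1def
  set Q2 : ℝ × ℝ := (μ2', σ2') with hQ2def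
  set s : Finset (ℝ × ℝ) := {P1, P0, P2, Q1, Q2} with hsdef
  set c : ℝ × ℝ → ℝ := fun q =>
    (if q = P1 then (1 - lam1 - lam2) else 0) + (if q = P0 then lam1 - lam1' else 0)
    + (if q = P2 then lam2 else 0) + (if q = Q1 then -(1 - lam1' - lam2') else 0)
    + (if q = Q2 then -lam2' else 0) with hcdef
  have hmemP1 : P1 ∈ s := by simp [hsdef]
  have hmemP0 : P0 ∈ s := by simp [hsdef]
  have hmemP2 : P2 ∈ s := by simp [hsdef]
  have hmemQ1 : Q1 ∈ s := by simp [hsdef]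
  have hmemQ2 : Q2 ∈ s := by simp [hsdef]
  have hσs : ∀ q ∈ s, 0 < q.2 := by
    intro q hq
    simp only [hsdef, Finset.mem_insert, Finset.mem_singleton] at hq
    rcases hq with h | h | h | h | h <;> subst h <;>
      simp [hP1def, hP0def, hP2def, hQ1def, hQ2def] <;> linarith
  have hstd : ∀ t : ℝ, phiMS 0 1 t = stdPhi t := by
    intro t; simp [phiMS]
  have hsum0 : ∀ t, ∑ q ∈ s, c q * phiMS q.1 q.2 t = 0 := by
    intro t
    have expand : ∑ q ∈ s, c q * phiMS q.1 q.2 t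
        = (1 - lam1 - lam2) * phiMS P1.1 P1.2 t + (lam1 - lam1') * phiMS P0.1 P0.2 t
          + lam2 * phiMS P2.1 P2.2 t + (-(1 - lam1' - lam2')) * phiMS Q1.1 Q1.2 t
          + (-lam2') * phiMS Q2.1 Q2.2 t := by
      simp only [hcdef, add_mul, Finset.sum_add_distrib, ite_mul, zero_mul,
        Finset.sum_ite_eq' s, hmemP1, hmemP0, hmemP2, hmemQ1, hmemQ2, if_true]
    rw [expand]
    have h := heq t
    have h0 : phiMS P0.1 P0.2 t = stdPhi t := hstd t
    have e1 : phiMS P1.1 P1.2 t = phiMS μ1 σ1 t := rfl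
    have e2 : phiMS P2.1 P2.2 t = phiMS μ2 σ2 t := rfl
    have e3 : phiMS Q1.1 Q1.2 t = phiMS μ1' σ1' t := rfl
    have e4 : phiMS Q2.1 Q2.2 t = phiMS μ2' σ2' t := rfl
    rw [h0, e1, e2, e3, e4]
    linarith
  have hc := gauss_indep s hσs c hsum0
  -- basic disequalities
  have hP1P0 : P1 ≠ P0 := by
    simp only [hP1def, hP0def, ne_eq, Prod.mk.injEq, not_and]
    intro h; linarith
  have hP1P2 : P1 ≠ P2 := by
    simp only [hP1def, hP2def, ne_eq, Prod.mk.injEq, not_and]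
    intro h; linarith
  have hP1Q2 : P1 ≠ Q2 := by
    simp only [hP1def, hQ2def, ne_eq, Prod.mk.injEq, not_and]
    intro h; linarith
  have hP0P2 : P0 ≠ P2 := by
    simp only [hP0def, hP2def, ne_eq, Prod.mk.injEq, not_and]
    intro h; linarith
  have hP0Q1 : P0 ≠ Q1 := by
    simp only [hP0def, hQ1def, ne_eq, Prod.mk.injEq, not_and]
    intro h; linarith
  have hP0Q2 : P0 ≠ Q2 := by
    simp only [hP0def, hQ2def, ne_eq, Prod.mk.injEq, not_and]
    intro h; linarith
  have hP2Q1 : P2 ≠ Q1 := by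
    simp only [hP2def, hQ1def, ne_eq, Prod.mk.injEq, not_and]
    intro h; linarith
  have hQ1Q2 : Q1 ≠ Q2 := by
    simp only [hQ1def, hQ2def, ne_eq, Prod.mk.injEq, not_and]
    intro h; linarith
  -- from c P0 = 0 : lam1 = lam1'
  have hl1 : lam1 = lam1' := by
    have h := hc P0 hmemP0
    simp [hcdef, Ne.symm hP1P0, hP0P2, hP0Q1, hP0Q2] at h
    linarith
  -- from c P2 = 0 : P2 = Q2 and lam2 = lam2'
  have hP2Q2 : P2 = Q2 := by
    by_contra hne
    have h := hc P2 hmemP2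
    simp [hcdef, Ne.symm hP1P2, Ne.symm hP0P2, hP2Q1, hne] at h
    linarith
  have hl2 : lam2 = lam2' := by
    have h := hc P2 hmemP2
    simp [hcdef, Ne.symm hP1P2, Ne.symm hP0P2, hP2Q1, hP2Q2, Ne.symm hP1Q2, Ne.symm hP0Q2, Ne.symm hQ1Q2] at h
    linarith
  -- from c P1 = 0 : P1 = Q1
  have hP1Q1 : P1 = Q1 := by
    by_contra hne
    have h := hc P1 hmemP1
    simp [hcdef, hP1P0, hP1P2, hP1Q2, hne] at h
    linarith
  have e1 : μ1 = μ1' ∧ σ1 = σ1' := by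
    have h := hP1Q1
    rw [hP1def, hQ1def, Prod.mk.injEq] at h
    exact h
  have e2 : μ2 = μ2' ∧ σ2 = σ2' := by
    have h := hP2Q2
    rw [hP2def, hQ2def, Prod.mk.injEq] at h
    exact h
  exact ⟨e1.1, e1.2, e2.1, e2.2, hl1, hl2⟩
end

section
/- L² closeness of normalized ranks to i.i.d. uniforms. Let N ≥ 1 and let U_1, ..., U_N be i.i.d. random variables uniformly distributed on [0,1]. For each j define the rank R_j = #{ i ∈ {1,...,N} : U_i ≤ U_j }. Then for every j ∈ {1,...,N}, E[(U_j − R_j/(N+1))²] = (1/N) Σ_{k=1}^{N} k(N−k+1)/((N+1)²(N+2)) = 1/(6(N+1)) < 1/N. -/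
open MeasureTheory ProbabilityTheory

noncomputable def unif : Measure ℝ := volume.restrict (Set.Icc (0 : ℝ) 1)

instance : IsProbabilityMeasure unif := ⟨by simp [unif, Real.volume_Icc]⟩

lemma unif_ae_mem : ∀ᵐ y ∂unif, y ∈ Set.Icc (0:ℝ) 1 := ae_restrict_mem measurableSet_Icc

lemma bdd_integrable {α : Type*} [MeasurableSpace α] {μ : Measure α} [IsFiniteMeasure μ]
    {f : α → ℝ} (hm : AEStronglyMeasurable f μ) {C : ℝ} (h : ∀ᵐ x ∂μ, |f x| ≤ C) :
    Integrable f μ :=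
  Integrable.mono' (integrable_const C) hm (by simpa [Real.norm_eq_abs] using h)

lemma meas_ind : Measurable (fun p : ℝ × ℝ => if p.1 ≤ p.2 then (1:ℝ) else 0) :=
  Measurable.ite (measurableSet_le measurable_fst measurable_snd) measurable_const
    measurable_const

lemma meas_ind_mul : Measurable (fun p : ℝ × ℝ => p.2 * (if p.1 ≤ p.2 then (1:ℝ) else 0)) :=
  measurable_snd.mul meas_ind

lemma meas_ind3 : Measurable (fun q : (ℝ × ℝ) × ℝ =>
    (if q.1.1 ≤ q.2 then (1:ℝ) else 0) * (if q.1.2 ≤ q.2 then (1:ℝ) else 0)) := by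
  refine Measurable.mul ?_ ?_ <;>
    exact Measurable.ite (measurableSet_le (by fun_prop) (by fun_prop)) measurable_const
      measurable_const

lemma ae_snd_mem : ∀ᵐ p : ℝ × ℝ ∂(unif.prod unif), p.2 ∈ Set.Icc (0:ℝ) 1 :=
  (Measure.quasiMeasurePreserving_snd).ae unif_ae_mem

lemma unif_inner (y : ℝ) (hy : y ∈ Set.Icc (0:ℝ) 1) :
    ∫ x, (if x ≤ y then (1:ℝ) else 0) ∂unif = y := by
  have : (fun x => if x ≤ y then (1:ℝ) else 0) = Set.indicator (Set.Iic y) (fun _ => 1) := by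
    ext x; simp [Set.indicator_apply]
  rw [this, MeasureTheory.integral_indicator measurableSet_Iic,
    MeasureTheory.setIntegral_const]
  have h2 : unif (Set.Iic y) = ENNReal.ofReal y := by
    rw [unif, Measure.restrict_apply measurableSet_Iic]
    have : Set.Iic y ∩ Set.Icc (0:ℝ) 1 = Set.Icc 0 y := by
      ext x; simp only [Set.mem_inter_iff, Set.mem_Iic, Set.mem_Icc]
      exact ⟨fun ⟨h1, h2, _⟩ => ⟨h2, h1⟩, fun ⟨h1, h2⟩ => ⟨h2, h1, h2.trans hy.2⟩⟩
    rw [this, Real.volume_Icc]; simp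
  rw [measureReal_def, h2, ENNReal.toReal_ofReal hy.1]; simp

lemma unif_moment1 : ∫ x, x ∂unif = 1/2 := by
  rw [unif, MeasureTheory.integral_Icc_eq_integral_Ioc,
    ← intervalIntegral.integral_of_le (by norm_num : (0:ℝ) ≤ 1)]
  simp [integral_id]

lemma unif_moment2 : ∫ x, x^2 ∂unif = 1/3 := by
  rw [unif, MeasureTheory.integral_Icc_eq_integral_Ioc,
    ← intervalIntegral.integral_of_le (by norm_num : (0:ℝ) ≤ 1)]
  simp; norm_num

lemma intPair : ∫ p, (if p.1 ≤ p.2 then (1:ℝ) else 0) ∂(unif.prod unif) = 1/2 := by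
  have hint : Integrable (fun p : ℝ × ℝ => if p.1 ≤ p.2 then (1:ℝ) else 0) (unif.prod unif) :=
    bdd_integrable meas_ind.aestronglyMeasurable (C := 1)
      (Filter.Eventually.of_forall fun p => by split <;> simp)
  rw [MeasureTheory.integral_prod_symm _ hint, ← unif_moment1]
  refine integral_congr_ae ?_
  filter_upwards [unif_ae_mem] with y hy
  exact unif_inner y hy

lemma intPairMul : ∫ p : ℝ × ℝ, p.2 * (if p.1 ≤ p.2 then (1:ℝ) else 0) ∂(unif.prod unif)
    = 1/3 := by
  have hint : Integrable (fun p : ℝ × ℝ => p.2 * (if p.1 ≤ p.2 then (1:ℝ) else 0))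
      (unif.prod unif) := by
    refine bdd_integrable meas_ind_mul.aestronglyMeasurable (C := 1) ?_
    filter_upwards [ae_snd_mem] with p hp
    have : |p.2| ≤ 1 := abs_le.2 ⟨by linarith [hp.1], hp.2⟩
    calc |p.2 * _| ≤ |p.2| * 1 := by
          rw [abs_mul]; gcongr; split <;> simp
      _ ≤ 1 := by linarith
  rw [MeasureTheory.integral_prod_symm _ hint, ← unif_moment2]
  refine integral_congr_ae ?_
  filter_upwards [unif_ae_mem] with y hy
  rw [MeasureTheory.integral_const_mul, unif_inner y hy]; ring

lemma intTriple : ∫ q : (ℝ × ℝ) × ℝ,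
    (if q.1.1 ≤ q.2 then (1:ℝ) else 0) * (if q.1.2 ≤ q.2 then (1:ℝ) else 0)
    ∂((unif.prod unif).prod unif) = 1/3 := by
  have hint : Integrable (fun q : (ℝ × ℝ) × ℝ =>
      (if q.1.1 ≤ q.2 then (1:ℝ) else 0) * (if q.1.2 ≤ q.2 then (1:ℝ) else 0))
      ((unif.prod unif).prod unif) :=
    bdd_integrable meas_ind3.aestronglyMeasurable (C := 1)
      (Filter.Eventually.of_forall fun q => by split <;> split <;> simp)
  rw [MeasureTheory.integral_prod_symm _ hint, ← unif_moment2]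
  refine integral_congr_ae ?_
  filter_upwards [unif_ae_mem] with z hz
  have : ∫ p : ℝ × ℝ, (if p.1 ≤ z then (1:ℝ) else 0) * (if p.2 ≤ z then (1:ℝ) else 0)
      ∂(unif.prod unif)
      = (∫ x, (if x ≤ z then (1:ℝ) else 0) ∂unif) * ∫ y, (if y ≤ z then (1:ℝ) else 0) ∂unif :=
    MeasureTheory.integral_prod_mul (fun x => if x ≤ z then (1:ℝ) else 0)
      (fun y => if y ≤ z then (1:ℝ) else 0)
  rw [this, unif_inner z hz]; ring

lemma sum_Icc_cast (N : ℕ) : ∑ k ∈ Finset.Icc 1 N, (k:ℝ) = N*(N+1)/2 := by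
  induction N with
  | zero => simp
  | succ n ih =>
    rw [Finset.sum_Icc_succ_top (by omega : 1 ≤ n + 1), ih]
    push_cast; ring

lemma sum_Icc_sq (N : ℕ) : ∑ k ∈ Finset.Icc 1 N, (k:ℝ)^2 = N*(N+1)*(2*N+1)/6 := by
  induction N with
  | zero => simp
  | succ n ih =>
    rw [Finset.sum_Icc_succ_top (by omega : 1 ≤ n + 1), ih]
    push_cast; ring

/-- L² closeness of normalized ranks to i.i.d. uniforms. -/
theorem rank_L2_close_to_uniform
    {Ω : Type*} [MeasurableSpace Ω] (P : Measure Ω) [IsProbabilityMeasure P]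
    (N : ℕ) (hN : 1 ≤ N)
    (U : Fin N → Ω → ℝ) (hU : ∀ i, Measurable (U i))
    (hindep : iIndepFun U P)
    (hunif : ∀ i, P.map (U i) = volume.restrict (Set.Icc (0 : ℝ) 1))
    (R : Fin N → Ω → ℕ)
    (hR : ∀ j ω, R j ω = (Finset.univ.filter fun i => U i ω ≤ U j ω).card) :
    ∀ j : Fin N,
      (∫ ω, (U j ω - (R j ω : ℝ) / ((N : ℝ) + 1)) ^ 2 ∂P
        = (1 / (N : ℝ)) * ∑ k ∈ Finset.Icc 1 N,
            (k : ℝ) * ((N : ℝ) - k + 1) / (((N : ℝ) + 1) ^ 2 * ((N : ℝ) + 2)))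
      ∧ ((1 / (N : ℝ)) * ∑ k ∈ Finset.Icc 1 N,
            (k : ℝ) * ((N : ℝ) - k + 1) / (((N : ℝ) + 1) ^ 2 * ((N : ℝ) + 2))
          = 1 / (6 * ((N : ℝ) + 1)))
      ∧ (1 / (6 * ((N : ℝ) + 1)) < 1 / (N : ℝ)) := by
  intro j
  have hNpos : (0:ℝ) < N := by exact_mod_cast Nat.lt_of_lt_of_le Nat.zero_lt_one hN
  have hNne : (N:ℝ) ≠ 0 := ne_of_gt hNpos
  have hN1 : ((N:ℝ) + 1) ≠ 0 := by positivity
  have hN2 : ((N:ℝ) + 2) ≠ 0 := by positivity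
  have hunif' : ∀ i, P.map (U i) = unif := hunif
  -- second conjunct
  have conj2 : (1 / (N : ℝ)) * ∑ k ∈ Finset.Icc 1 N,
      (k : ℝ) * ((N : ℝ) - k + 1) / (((N : ℝ) + 1) ^ 2 * ((N : ℝ) + 2))
      = 1 / (6 * ((N : ℝ) + 1)) := by
    have key2 : ∑ k ∈ Finset.Icc 1 N, (k:ℝ) * ((N:ℝ) - k + 1)
        = (N:ℝ) * ((N:ℝ)+1) * ((N:ℝ)+2) / 6 := by
      have h : ∀ k ∈ Finset.Icc 1 N, (k:ℝ) * ((N:ℝ) - k + 1)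
          = ((N:ℝ)+1) * (k:ℝ) - (k:ℝ)^2 := fun k _ => by ring
      rw [Finset.sum_congr rfl h, Finset.sum_sub_distrib, ← Finset.mul_sum,
        sum_Icc_cast N, sum_Icc_sq N]
      ring
    rw [← Finset.sum_div, key2]
    field_simp
  -- third conjunct
  have conj3 : 1 / (6 * ((N : ℝ) + 1)) < 1 / (N : ℝ) :=
    one_div_lt_one_div_of_lt hNpos (by linarith)
  refine ⟨?_, conj2, conj3⟩
  rw [conj2]
  -- indicator functions
  set I : Fin N → Ω → ℝ := fun i ω => if U i ω ≤ U j ω then (1:ℝ) else 0 with hI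
  have hImeas : ∀ i, Measurable (I i) := fun i =>
    Measurable.ite (measurableSet_le (hU i) (hU j)) measurable_const measurable_const
  have hIbd : ∀ i ω, |I i ω| ≤ 1 := fun i ω => by simp only [hI]; split <;> simp
  have hIj : ∀ ω, I j ω = 1 := fun ω => if_pos le_rfl
  have hIsq : ∀ i ω, I i ω * I i ω = I i ω := fun i ω => by
    simp only [hI]; split <;> norm_num
  have hRsum : ∀ ω, (R j ω : ℝ) = ∑ i, I i ω := by
    intro ω
    rw [hR j ω, Finset.card_filter]
    push_cast
    exact Finset.sum_congr rfl fun i _ => by simp [hI, apply_ite]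
  have hUmem : ∀ᵐ ω ∂P, U j ω ∈ Set.Icc (0:ℝ) 1 := by
    have h := unif_ae_mem
    rw [← hunif' j] at h
    exact (ae_map_iff (hU j).aemeasurable measurableSet_Icc).mp h
  -- basic integrals
  have EU1 : ∫ ω, U j ω ∂P = 1/2 := by
    have h := MeasureTheory.integral_map (φ := U j) (μ := P) (hU j).aemeasurable
      (f := fun x : ℝ => x) measurable_id.aestronglyMeasurable
    rw [hunif' j, unif_moment1] at h
    exact h.symm
  have EU2 : ∫ ω, (U j ω)^2 ∂P = 1/3 := by
    have h := MeasureTheory.integral_map (φ := U j) (μ := P) (hU j).aemeasurable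
      (f := fun x : ℝ => x^2) (measurable_id.pow_const 2).aestronglyMeasurable
    rw [hunif' j, unif_moment2] at h
    exact h.symm
  have hmap2 : ∀ i, i ≠ j → P.map (fun ω => (U i ω, U j ω)) = unif.prod unif := by
    intro i hij
    rw [(indepFun_iff_map_prod_eq_prod_map_map (hU i).aemeasurable (hU j).aemeasurable).mp
      (hindep.indepFun hij), hunif' i, hunif' j]
  have EI : ∀ i, i ≠ j → ∫ ω, I i ω ∂P = 1/2 := by
    intro i hij
    have h := MeasureTheory.integral_map (φ := fun ω => (U i ω, U j ω)) (μ := P)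
      ((hU i).prodMk (hU j)).aemeasurable
      (f := fun p : ℝ × ℝ => if p.1 ≤ p.2 then (1:ℝ) else 0) meas_ind.aestronglyMeasurable
    rw [hmap2 i hij, intPair] at h
    exact h.symm
  have EIval : ∀ i, ∫ ω, I i ω ∂P = if i = j then 1 else 1/2 := by
    intro i
    by_cases h : i = j
    · rw [if_pos h, h]; simp [hIj]
    · rw [EI i h, if_neg h]
  have EUI : ∀ i, i ≠ j → ∫ ω, U j ω * I i ω ∂P = 1/3 := by
    intro i hij
    have h := MeasureTheory.integral_map (φ := fun ω => (U i ω, U j ω)) (μ := P)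
      ((hU i).prodMk (hU j)).aemeasurable
      (f := fun p : ℝ × ℝ => p.2 * (if p.1 ≤ p.2 then (1:ℝ) else 0))
      meas_ind_mul.aestronglyMeasurable
    rw [hmap2 i hij, intPairMul] at h
    exact h.symm
  have hmap3 : ∀ i i', i ≠ j → i' ≠ j → i ≠ i' →
      P.map (fun ω => ((U i ω, U i' ω), U j ω)) = (unif.prod unif).prod unif := by
    intro i i' hij hij' hii'
    have h1 : IndepFun (fun ω => (U i ω, U i' ω)) (U j) P :=
      hindep.indepFun_prodMk hU i i' j hij hij'
    rw [(indepFun_iff_map_prod_eq_prod_map_map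
      ((hU i).prodMk (hU i')).aemeasurable (hU j).aemeasurable).mp h1]
    congr 1
    · rw [(indepFun_iff_map_prod_eq_prod_map_map (hU i).aemeasurable (hU i').aemeasurable).mp
        (hindep.indepFun hii'), hunif' i, hunif' i']
    · exact hunif' j
  have EII : ∀ i i', i ≠ j → i' ≠ j → i ≠ i' → ∫ ω, I i ω * I i' ω ∂P = 1/3 := by
    intro i i' hij hij' hii'
    have h := MeasureTheory.integral_map (φ := fun ω => ((U i ω, U i' ω), U j ω)) (μ := P)
      (((hU i).prodMk (hU i')).prodMk (hU j)).aemeasurable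
      (f := fun q : (ℝ × ℝ) × ℝ =>
        (if q.1.1 ≤ q.2 then (1:ℝ) else 0) * (if q.1.2 ≤ q.2 then (1:ℝ) else 0))
      meas_ind3.aestronglyMeasurable
    rw [hmap3 i i' hij hij' hii', intTriple] at h
    exact h.symm
  -- integrability
  have hIint : ∀ i, Integrable (I i) P := fun i =>
    bdd_integrable (hImeas i).aestronglyMeasurable (Filter.Eventually.of_forall (hIbd i))
  have hUIint : ∀ i, Integrable (fun ω => U j ω * I i ω) P := by
    intro i
    refine bdd_integrable ((hU j).mul (hImeas i)).aestronglyMeasurable (C := 1) ?_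
    filter_upwards [hUmem] with ω hω
    have h1 : |U j ω| ≤ 1 := abs_le.2 ⟨by linarith [hω.1], hω.2⟩
    calc |U j ω * I i ω| = |U j ω| * |I i ω| := abs_mul _ _
      _ ≤ 1 * 1 := mul_le_mul h1 (hIbd i ω) (abs_nonneg _) zero_le_one
      _ = 1 := by norm_num
  have hIIint : ∀ i i', Integrable (fun ω => I i ω * I i' ω) P := by
    intro i i'
    refine bdd_integrable ((hImeas i).mul (hImeas i')).aestronglyMeasurable (C := 1)
      (Filter.Eventually.of_forall fun ω => ?_)
    calc |I i ω * I i' ω| = |I i ω| * |I i' ω| := abs_mul _ _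
      _ ≤ 1 * 1 := mul_le_mul (hIbd i ω) (hIbd i' ω) (abs_nonneg _) zero_le_one
      _ = 1 := by norm_num
  have hU2int : Integrable (fun ω => (U j ω)^2) P := by
    refine bdd_integrable ((hU j).pow_const 2).aestronglyMeasurable (C := 1) ?_
    filter_upwards [hUmem] with ω hω
    have h1 : |U j ω| ≤ 1 := abs_le.2 ⟨by linarith [hω.1], hω.2⟩
    calc |(U j ω)^2| = |U j ω|^2 := abs_pow _ _
      _ ≤ 1 := by nlinarith [abs_nonneg (U j ω)]
  have hint2 : Integrable (fun ω => ∑ i, U j ω * I i ω) P :=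
    integrable_finset_sum _ fun i _ => hUIint i
  have hint3 : Integrable (fun ω => ∑ i, ∑ i', I i ω * I i' ω) P :=
    integrable_finset_sum _ fun i _ => integrable_finset_sum _ fun i' _ => hIIint i i'
  -- pointwise expansion
  have expand : ∀ ω, (U j ω - (R j ω : ℝ) / ((N:ℝ)+1))^2
      = (U j ω)^2 - (2/((N:ℝ)+1)) * (∑ i, U j ω * I i ω)
        + (1/((N:ℝ)+1)^2) * (∑ i, ∑ i', I i ω * I i' ω) := by
    intro ω
    rw [hRsum ω, ← Finset.mul_sum, ← Finset.sum_mul_sum]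
    field_simp
    ring
  -- sums of integrals
  have SUI : ∑ i, ∫ ω, U j ω * I i ω ∂P = (N:ℝ)/3 + 1/6 := by
    have h : ∀ i ∈ (Finset.univ : Finset (Fin N)), ∫ ω, U j ω * I i ω ∂P
        = 1/3 + (if i = j then (1:ℝ)/6 else 0) := by
      intro i _
      by_cases hij : i = j
      · rw [hij]
        have : (fun ω => U j ω * I j ω) = fun ω => U j ω := funext fun ω => by
          rw [hIj ω, mul_one]
        rw [this, EU1, if_pos rfl]; norm_num
      · rw [EUI i hij, if_neg hij]; norm_num
    rw [Finset.sum_congr rfl h, Finset.sum_add_distrib, Finset.sum_const,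
      Finset.card_univ, Fintype.card_fin, Finset.sum_ite_eq' Finset.univ j fun _ => (1:ℝ)/6,
      if_pos (Finset.mem_univ j)]
    push_cast; ring
  have SII : ∑ i, ∑ i', ∫ ω, I i ω * I i' ω ∂P
      = ((N:ℝ)/2 + 1/2) + ((N:ℝ) - 1) * ((N:ℝ)/3 + 1/3) := by
    have inner : ∀ i, ∑ i', ∫ ω, I i ω * I i' ω ∂P
        = if i = j then ((N:ℝ)/2 + 1/2) else ((N:ℝ)/3 + 1/3) := by
      intro i
      by_cases hij : i = j
      · rw [hij, if_pos rfl]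
        have h : ∀ i' ∈ (Finset.univ : Finset (Fin N)), ∫ ω, I j ω * I i' ω ∂P
            = 1/2 + (if i' = j then (1:ℝ)/2 else 0) := by
          intro i' _
          have : (fun ω => I j ω * I i' ω) = I i' := funext fun ω => by rw [hIj ω, one_mul]
          rw [this, EIval i']
          by_cases h : i' = j <;> simp [h] <;> norm_num
        rw [Finset.sum_congr rfl h, Finset.sum_add_distrib, Finset.sum_const,
          Finset.card_univ, Fintype.card_fin,
          Finset.sum_ite_eq' Finset.univ j fun _ => (1:ℝ)/2, if_pos (Finset.mem_univ j)]
        push_cast; ring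
      · rw [if_neg hij]
        have h : ∀ i' ∈ (Finset.univ : Finset (Fin N)), ∫ ω, I i ω * I i' ω ∂P
            = 1/3 + (if i' = j then (1:ℝ)/6 else 0) + (if i' = i then (1:ℝ)/6 else 0) := by
          intro i' _
          by_cases h1 : i' = j
          · rw [h1]
            have : (fun ω => I i ω * I j ω) = I i := funext fun ω => by
              rw [hIj ω, mul_one]
            rw [this, EI i hij, if_pos rfl, if_neg (fun h => hij h.symm)]; norm_num
          · by_cases h2 : i' = i
            · rw [h2]
              have : (fun ω => I i ω * I i ω) = I i := funext fun ω => hIsq i ω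
              rw [this, EI i hij, if_neg hij, if_pos rfl]
              norm_num
            · rw [EII i i' hij h1 (fun h => h2 h.symm), if_neg h1, if_neg h2]; norm_num
        rw [Finset.sum_congr rfl h, Finset.sum_add_distrib, Finset.sum_add_distrib,
          Finset.sum_const, Finset.card_univ, Fintype.card_fin,
          Finset.sum_ite_eq' Finset.univ j fun _ => (1:ℝ)/6,
          Finset.sum_ite_eq' Finset.univ i fun _ => (1:ℝ)/6,
          if_pos (Finset.mem_univ j), if_pos (Finset.mem_univ i)]
        push_cast; ring
    have h2 : ∀ i ∈ (Finset.univ : Finset (Fin N)), ∑ i', ∫ ω, I i ω * I i' ω ∂P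
        = ((N:ℝ)/3 + 1/3) + (if i = j then ((N:ℝ)/2 + 1/2 - ((N:ℝ)/3 + 1/3)) else 0) := by
      intro i _
      rw [inner i]
      by_cases h : i = j <;> simp [h]
    rw [Finset.sum_congr rfl h2, Finset.sum_add_distrib, Finset.sum_const,
      Finset.card_univ, Fintype.card_fin,
      Finset.sum_ite_eq' Finset.univ j fun _ => ((N:ℝ)/2 + 1/2 - ((N:ℝ)/3 + 1/3)),
      if_pos (Finset.mem_univ j)]
    push_cast; ring
  -- main computation
  calc ∫ ω, (U j ω - (R j ω : ℝ) / ((N:ℝ)+1))^2 ∂P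
      = ∫ ω, ((U j ω)^2 - (2/((N:ℝ)+1)) * (∑ i, U j ω * I i ω)
          + (1/((N:ℝ)+1)^2) * (∑ i, ∑ i', I i ω * I i' ω)) ∂P :=
        integral_congr_ae (Filter.Eventually.of_forall fun ω => expand ω)
    _ = (∫ ω, ((U j ω)^2 - (2/((N:ℝ)+1)) * (∑ i, U j ω * I i ω)) ∂P)
          + (∫ ω, (1/((N:ℝ)+1)^2) * (∑ i, ∑ i', I i ω * I i' ω) ∂P) :=
        integral_add (hU2int.sub (hint2.const_mul (2/((N:ℝ)+1))))
          (hint3.const_mul (1/((N:ℝ)+1)^2))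
    _ = (∫ ω, (U j ω)^2 ∂P) - (∫ ω, (2/((N:ℝ)+1)) * (∑ i, U j ω * I i ω) ∂P)
          + (∫ ω, (1/((N:ℝ)+1)^2) * (∑ i, ∑ i', I i ω * I i' ω) ∂P) := by
        rw [integral_sub hU2int (hint2.const_mul (2/((N:ℝ)+1)))]
    _ = (∫ ω, (U j ω)^2 ∂P) - (2/((N:ℝ)+1)) * (∫ ω, ∑ i, U j ω * I i ω ∂P)
          + (1/((N:ℝ)+1)^2) * (∫ ω, ∑ i, ∑ i', I i ω * I i' ω ∂P) := by
        rw [MeasureTheory.integral_const_mul, MeasureTheory.integral_const_mul]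
    _ = 1/3 - (2/((N:ℝ)+1)) * ((N:ℝ)/3 + 1/6)
          + (1/((N:ℝ)+1)^2) * (((N:ℝ)/2 + 1/2) + ((N:ℝ) - 1) * ((N:ℝ)/3 + 1/3)) := by
        rw [EU2, integral_finset_sum _ fun i _ => hUIint i, SUI,
          integral_finset_sum _ fun i _ =>
            integrable_finset_sum _ fun i' _ => hIIint i i']
        congr 1
        congr 1
        rw [Finset.sum_congr rfl fun i _ =>
          integral_finset_sum _ fun i' _ => hIIint i i', SII]
    _ = 1 / (6 * ((N : ℝ) + 1)) := by field_simp; ring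
end
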